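/- Let d ≥ 1, H ∈ (0,1), n ≥ 1, let P_1,…,P_n ∈ EuclideanSpace ℝ (Fin d) be pairwise distinct points, and let c_1,…,c_n be real numbers, not all zero, with ∑_{i=1}^n c_i = 0. Then ∑_{i,j=1}^n c_i c_j ‖P_i − P_j‖^{2H} < 0. -/

import Mathlib

open Finset MeasureTheory Set Real Filter

set_option maxHeartbeats 1000000

section chars
variable {V : Type*} [NormedAddCommGroup V] [InnerProductSpace ℝ V]

local notation "⟪" x ", " y "⟫" => @inner ℝ _ _ x y

/-- The character `x ↦ exp ⟪w, x⟫` as a monoid hom on `Multiplicative V`. -/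
noncomputable def expChar (w : V) : Multiplicative V →* ℝ where
  toFun x := rexp ⟪w, Multiplicative.toAdd x⟫
  map_one' := by simp
  map_mul' x y := by simp [inner_add_right, Real.exp_add]

lemma expChar_injective : Function.Injective (expChar : V → Multiplicative V →* ℝ) := by
  intro a b hab
  have h := congrArg (fun f : Multiplicative V →* ℝ => f (Multiplicative.ofAdd (a - b))) hab
  simp only [expChar, MonoidHom.coe_mk, OneHom.coe_mk, toAdd_ofAdd] at h
  have h2 : ⟪a, a - b⟫ = ⟪b, a - b⟫ := Real.exp_injective h
  have h3 : ⟪a - b, a - b⟫ = (0 : ℝ) := by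
    rw [inner_sub_left, h2]; ring
  exact sub_eq_zero.mp (inner_self_eq_zero.mp h3)

lemma exp_sum_eq_zero {n : ℕ} {w : Fin n → V} (hw : Function.Injective w) {d : Fin n → ℝ}
    (h : ∀ x : V, ∑ i, d i * rexp ⟪w i, x⟫ = 0) : ∀ i, d i = 0 := by
  have hLI : LinearIndependent ℝ
      (fun i : Fin n => ((expChar (w i) : Multiplicative V → ℝ))) := by
    have := (linearIndependent_monoidHom (Multiplicative V) ℝ)
    exact this.comp (fun i => expChar (w i)) (expChar_injective.comp hw)
  refine Fintype.linearIndependent_iff.mp hLI d ?_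
  funext x
  have := h (Multiplicative.toAdd x)
  simpa [expChar, Finset.sum_apply] using this

section gauss
variable [FiniteDimensional ℝ V] [MeasurableSpace V] [BorelSpace V]

lemma integrable_gauss {b : ℝ} (hb : 0 < b) :
    Integrable (fun x : V => rexp (-b * ‖x‖ ^ 2)) := by
  have h := (GaussianFourier.integrable_cexp_neg_mul_sq_norm_add (V := V)
      (b := (b : ℂ)) (by simpa using hb) 0 0).norm
  refine h.congr (Eventually.of_forall fun x => ?_)
  simp only [Complex.norm_exp, zero_mul, add_zero]
  congr 1
  have : (-(b:ℂ) * (‖x‖:ℂ) ^ 2) = ((-b * ‖x‖ ^ 2 : ℝ) : ℂ) := by push_cast; ring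
  rw [this, Complex.ofReal_re]

lemma gauss_pd {n : ℕ} (P : Fin n → V) (hP : Function.Injective P)
    (c : Fin n → ℝ) (hc : c ≠ 0) {t : ℝ} (ht : 0 < t) :
    0 < ∑ i, ∑ j, c i * c j * rexp (-t * ‖P i - P j‖ ^ 2) := by
  classical
  set ψ : V → ℝ := fun x => ∑ i, c i * rexp (-(2*t) * ‖x - P i‖ ^ 2) with hψ
  -- key pointwise identity
  have key : ∀ p q x : V, rexp (-(2*t) * ‖x - p‖ ^ 2) * rexp (-(2*t) * ‖x - q‖ ^ 2)
      = rexp (-t * ‖p - q‖ ^ 2) * rexp (-(4*t) * ‖x - (2:ℝ)⁻¹ • (p + q)‖ ^ 2) := by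
    intro p q x
    rw [← Real.exp_add, ← Real.exp_add]
    congr 1
    have h1 : x - (2:ℝ)⁻¹ • (p + q) = (2:ℝ)⁻¹ • ((x - p) + (x - q)) := by
      rw [smul_add, smul_add]; module
    have h2 : p - q = (x - q) - (x - p) := by abel
    rw [h1, h2, norm_smul]
    have hn : ‖(2:ℝ)⁻¹‖ = 2⁻¹ := by norm_num [Real.norm_eq_abs]
    rw [hn]
    set u := x - p
    set v := x - q
    have e1 := norm_add_sq_real u v
    have e2 := norm_sub_sq_real v u
    have e3 := real_inner_comm u v
    nlinarith [e1, e2, e3]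
  -- ψ is not identically zero
  have hψne : ∃ x, ψ x ≠ 0 := by
    by_contra hcon
    push_neg at hcon
    have h4t : (4*t : ℝ) ≠ 0 := by positivity
    have hwinj : Function.Injective (fun i => (4*t) • P i) :=
      fun i j hij => hP (smul_right_injective V h4t hij)
    have hd : ∀ i, c i * rexp (-(2*t) * ‖P i‖ ^ 2) = 0 := by
      refine exp_sum_eq_zero hwinj fun x => ?_
      have hx := hcon x
      have expand : ∀ i, rexp (-(2*t) * ‖x - P i‖ ^ 2)
          = rexp (-(2*t) * ‖x‖ ^ 2) * (rexp (-(2*t) * ‖P i‖ ^ 2)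
              * rexp ⟪(4*t) • P i, x⟫) := by
        intro i
        rw [← Real.exp_add, ← Real.exp_add]
        congr 1
        have := @norm_sub_sq_real V _ _ x (P i)
        rw [real_inner_smul_left, real_inner_comm]
        nlinarith [this]
      rw [hψ] at hx
      simp only [expand] at hx
      have hne : rexp (-(2*t) * ‖x‖ ^ 2) ≠ 0 := Real.exp_ne_zero _
      have : rexp (-(2*t) * ‖x‖ ^ 2) * ∑ i,
          (c i * rexp (-(2*t) * ‖P i‖ ^ 2)) * rexp ⟪(4*t) • P i, x⟫ = 0 := by
        rw [Finset.mul_sum]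
        rw [← hx]
        congr 1 with i
        ring
      rcases mul_eq_zero.mp this with h | h
      · exact absurd h hne
      · exact h
    apply hc
    funext i
    have := hd i
    rcases mul_eq_zero.mp this with h | h
    · exact h
    · exact absurd h (Real.exp_ne_zero _)
  -- Gaussian integrals
  have hGint : ∀ m : V, Integrable (fun x : V => rexp (-(4*t) * ‖x - m‖ ^ 2)) :=
    fun m => (integrable_gauss (by positivity : (0:ℝ) < 4*t)).comp_sub_right m
  set K : ℝ := ∫ x : V, rexp (-(4*t) * ‖x‖ ^ 2) with hK
  have hKval : ∀ m : V, ∫ x : V, rexp (-(4*t) * ‖x - m‖ ^ 2) = K := by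
    intro m
    exact integral_sub_right_eq_self (fun y : V => rexp (-(4*t) * ‖y‖ ^ 2)) m
  have hKpos : 0 < K := by
    rw [hK, GaussianFourier.integral_rexp_neg_mul_sq_norm (by positivity : (0:ℝ) < 4*t)]
    positivity
  -- ψ² expansion
  have hψsq : ∀ x, ψ x ^ 2 = ∑ i, ∑ j, (c i * c j * rexp (-t * ‖P i - P j‖ ^ 2))
      * rexp (-(4*t) * ‖x - (2:ℝ)⁻¹ • (P i + P j)‖ ^ 2) := by
    intro x
    rw [hψ, sq, Finset.sum_mul_sum]
    refine Finset.sum_congr rfl fun i _ => Finset.sum_congr rfl fun j _ => ?_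
    calc (c i * rexp (-(2*t) * ‖x - P i‖ ^ 2)) * (c j * rexp (-(2*t) * ‖x - P j‖ ^ 2))
        = c i * c j * (rexp (-(2*t) * ‖x - P i‖ ^ 2) * rexp (-(2*t) * ‖x - P j‖ ^ 2)) := by
          ring
      _ = _ := by rw [key]; ring
  have hterm : ∀ i j : Fin n, Integrable (fun x : V =>
      (c i * c j * rexp (-t * ‖P i - P j‖ ^ 2))
        * rexp (-(4*t) * ‖x - (2:ℝ)⁻¹ • (P i + P j)‖ ^ 2)) :=
    fun i j => (hGint _).const_mul _
  have hint2 : Integrable (fun x : V => ∑ i, ∑ j,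
      (c i * c j * rexp (-t * ‖P i - P j‖ ^ 2))
        * rexp (-(4*t) * ‖x - (2:ℝ)⁻¹ • (P i + P j)‖ ^ 2)) :=
    integrable_finset_sum _ fun i _ => integrable_finset_sum _ fun j _ => hterm i j
  have hψ2int : Integrable (fun x => ψ x ^ 2) :=
    hint2.congr (Eventually.of_forall fun x => (hψsq x).symm)
  have hI : ∫ x : V, ψ x ^ 2 = (∑ i, ∑ j, c i * c j * rexp (-t * ‖P i - P j‖ ^ 2)) * K := by
    rw [integral_congr_ae (Eventually.of_forall hψsq),
      integral_finset_sum _ fun i _ => integrable_finset_sum _ fun j _ => hterm i j]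
    rw [Finset.sum_mul]
    refine Finset.sum_congr rfl fun i _ => ?_
    rw [integral_finset_sum _ fun j _ => hterm i j, Finset.sum_mul]
    refine Finset.sum_congr rfl fun j _ => ?_
    rw [integral_const_mul, hKval]
  -- positivity of ∫ ψ²
  have h0 : 0 < ∫ x : V, ψ x ^ 2 := by
    rw [integral_pos_iff_support_of_nonneg_ae
      (Eventually.of_forall fun x => sq_nonneg (ψ x)) hψ2int]
    obtain ⟨x₀, hx₀⟩ := hψne
    have hψcont : Continuous ψ := by
      rw [hψ]
      refine continuous_finset_sum _ fun i _ => continuous_const.mul ?_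
      exact (Continuous.rexp (by continuity))
    have hU : IsOpen {x : V | ψ x ≠ 0} :=
      isOpen_compl_singleton.preimage hψcont
    refine lt_of_lt_of_le (hU.measure_pos volume ⟨x₀, hx₀⟩) (measure_mono ?_)
    intro x hx
    exact pow_ne_zero 2 hx
  rw [hI] at h0
  rcases mul_pos_iff.mp h0 with ⟨h, _⟩ | ⟨_, h⟩
  · exact h
  · linarith
end gauss

section subord
variable {H : ℝ}

lemma contOn_sub_mul {u : ℝ} {s : Set ℝ} (hs : s ⊆ Ioi 0) :
    ContinuousOn (fun t : ℝ => (1 - rexp (-(t*u))) * t ^ (-1-H)) s := by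
  apply ContinuousOn.mul
  · exact Continuous.continuousOn (by continuity)
  · exact ContinuousOn.rpow_const continuousOn_id fun x hx => Or.inl (ne_of_gt (hs hx))

lemma integrableOn_sub_mul (hH0 : 0 < H) (hH1 : H < 1) {u : ℝ} (hu : 0 ≤ u) :
    IntegrableOn (fun t : ℝ => (1 - rexp (-(t*u))) * t ^ (-1-H)) (Ioi 0) := by
  have hsplit : Set.Ioi (0:ℝ) = Set.Ioc (0:ℝ) 1 ∪ Set.Ioi (1:ℝ) := (Set.Ioc_union_Ioi_eq_Ioi zero_le_one).symm
  rw [hsplit]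
  apply IntegrableOn.union
  · refine Integrable.mono' (g := fun t : ℝ => u * t ^ (-H)) ?_ ?_ ?_
    · have h1 : IntervalIntegrable (fun t : ℝ => t ^ (-H)) volume 0 1 :=
        intervalIntegral.intervalIntegrable_rpow' (by linarith)
      exact ((intervalIntegrable_iff_integrableOn_Ioc_of_le zero_le_one).mp h1).const_mul u
    · exact (contOn_sub_mul (Ioc_subset_Ioi_self)).aestronglyMeasurable measurableSet_Ioc
    · filter_upwards [ae_restrict_mem measurableSet_Ioc] with t ht
      obtain ⟨ht0, _⟩ := ht
      have hexp1 : rexp (-(t*u)) ≤ 1 := Real.exp_le_one_iff.mpr (by nlinarith)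
      have h3 : 1 - rexp (-(t*u)) ≤ t * u := by
        have := Real.add_one_le_exp (-(t*u)); linarith
      have hpow : (0:ℝ) < t ^ (-1-H) := Real.rpow_pos_of_pos ht0 _
      rw [Real.norm_eq_abs, abs_of_nonneg (mul_nonneg (by linarith) hpow.le)]
      calc (1 - rexp (-(t*u))) * t ^ (-1-H) ≤ (t*u) * t ^ (-1-H) := by nlinarith
        _ = u * t ^ (-H) := by
            rw [show (-H : ℝ) = 1 + (-1-H) by ring, Real.rpow_add ht0, Real.rpow_one]; ring
  · refine Integrable.mono' (g := fun t : ℝ => t ^ (-1-H)) ?_ ?_ ?_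
    · exact integrableOn_Ioi_rpow_of_lt (by linarith) one_pos
    · exact (contOn_sub_mul (s := Ioi (1:ℝ)) (fun x hx => (lt_trans one_pos hx : (0:ℝ) < x))).aestronglyMeasurable
        measurableSet_Ioi
    · filter_upwards [ae_restrict_mem measurableSet_Ioi] with t ht
      have ht0 : (0:ℝ) < t := lt_trans one_pos ht
      have hexp0 : 0 < rexp (-(t*u)) := Real.exp_pos _
      have hexp1 : rexp (-(t*u)) ≤ 1 := Real.exp_le_one_iff.mpr (by nlinarith)
      have hpow : (0:ℝ) < t ^ (-1-H) := Real.rpow_pos_of_pos ht0 _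
      rw [Real.norm_eq_abs, abs_of_nonneg (mul_nonneg (by linarith) hpow.le)]
      nlinarith

/-- The constant `κ`. -/
noncomputable def kappa (H : ℝ) : ℝ := ∫ t in Ioi (0:ℝ), (1 - rexp (-t)) * t ^ (-1-H)

lemma kappa_pos (hH0 : 0 < H) (hH1 : H < 1) : 0 < kappa H := by
  have hint : IntegrableOn (fun t : ℝ => (1 - rexp (-t)) * t ^ (-1-H)) (Ioi 0) := by
    have := integrableOn_sub_mul hH0 hH1 (u := 1) zero_le_one
    simpa using this
  rw [kappa, setIntegral_pos_iff_support_of_nonneg_ae]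
  · have hsub : Ioi (0:ℝ) ⊆ Function.support fun t => (1 - rexp (-t)) * t ^ (-1-H) := by
      intro t ht
      have h1 : rexp (-t) < 1 := Real.exp_lt_one_iff.mpr (by linarith [mem_Ioi.mp ht])
      have h2 : (0:ℝ) < t ^ (-1-H) := Real.rpow_pos_of_pos ht _
      exact ne_of_gt (mul_pos (by linarith) h2)
    rw [Set.inter_eq_right.mpr hsub, Real.volume_Ioi]
    exact ENNReal.zero_lt_top
  · filter_upwards [ae_restrict_mem measurableSet_Ioi] with t ht
    have h1 : rexp (-t) ≤ 1 := Real.exp_le_one_iff.mpr (by linarith [mem_Ioi.mp ht])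
    have h2 : (0:ℝ) ≤ t ^ (-1-H) := (Real.rpow_pos_of_pos ht _).le
    exact mul_nonneg (by linarith) h2
  · exact hint

lemma integral_sub_mul_eq (hH0 : 0 < H) (hH1 : H < 1) {u : ℝ} (hu : 0 ≤ u) :
    ∫ t in Ioi (0:ℝ), (1 - rexp (-(t*u))) * t ^ (-1-H) = u ^ H * kappa H := by
  rcases eq_or_lt_of_le hu with h | hu'
  · rw [← h, Real.zero_rpow (ne_of_gt hH0), zero_mul]
    simp
  · have hcomp : ∫ t in Ioi (0:ℝ), ((1 - rexp (-(u*t))) * (u*t) ^ (-1-H))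
        = u⁻¹ • ∫ t in Ioi (u*0:ℝ), (1 - rexp (-t)) * t ^ (-1-H) :=
      integral_comp_mul_left_Ioi (fun s => (1 - rexp (-s)) * s ^ (-1-H)) 0 hu'
    rw [mul_zero] at hcomp
    have hpt : ∀ t ∈ Ioi (0:ℝ), (1 - rexp (-(u*t))) * (u*t) ^ (-1-H)
        = u ^ (-1-H) * ((1 - rexp (-(t*u))) * t ^ (-1-H)) := by
      intro t ht
      rw [Real.mul_rpow hu'.le (le_of_lt ht), mul_comm t u]
      ring
    rw [setIntegral_congr_fun measurableSet_Ioi hpt, integral_const_mul, smul_eq_mul] at hcomp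
    have hne : u ^ (-1-H) ≠ 0 := ne_of_gt (Real.rpow_pos_of_pos hu' _)
    have key : u ^ (-1-H) * (u ^ H * kappa H) = u⁻¹ * kappa H := by
      rw [← mul_assoc, ← Real.rpow_add hu', show (-1-H)+H = (-1:ℝ) by ring,
        Real.rpow_neg_one]
    exact mul_left_cancel₀ hne (hcomp.trans key.symm)

end subord

end chars

/-- strict negative definiteness of the kernel `‖x − y‖^{2H}` on `ℝ^d`
for `0 < H < 1`: there are no `H`-critical configurations in Euclidean space. -/
theorem stmt10 {d : ℕ} (hd : 1 ≤ d) {H : ℝ} (hH0 : 0 < H) (hH1 : H < 1)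
    {n : ℕ} (hn : 1 ≤ n) (P : Fin n → EuclideanSpace ℝ (Fin d))
    (hPinj : Function.Injective P)
    (c : Fin n → ℝ) (hc : c ≠ 0) (hsum : ∑ i, c i = 0) :
    ∑ i, ∑ j, c i * c j * ‖P i - P j‖ ^ (2 * H) < 0 := by
  classical
  have hκ := kappa_pos hH0 hH1
  have hg : ∀ i j : Fin n, IntegrableOn
      (fun t : ℝ => (1 - rexp (-(t * ‖P i - P j‖ ^ 2))) * t ^ (-1-H)) (Set.Ioi 0) :=
    fun i j => integrableOn_sub_mul hH0 hH1 (by positivity)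
  have hr : ∀ i j : Fin n, ‖P i - P j‖ ^ (2 * H) = (‖P i - P j‖ ^ 2) ^ H := by
    intro i j
    rw [← Real.rpow_natCast (‖P i - P j‖) 2, ← Real.rpow_mul (norm_nonneg _)]
    norm_num
  have hInt : ∀ i j : Fin n, ∫ t in Set.Ioi (0:ℝ),
      (1 - rexp (-(t * ‖P i - P j‖ ^ 2))) * t ^ (-1-H)
      = (‖P i - P j‖ ^ 2) ^ H * kappa H :=
    fun i j => integral_sub_mul_eq hH0 hH1 (by positivity)
  have hQpos : ∀ t : ℝ, 0 < t →
      0 < ∑ i, ∑ j, c i * c j * rexp (-(t * ‖P i - P j‖ ^ 2)) := by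
    intro t ht
    have := gauss_pd P hPinj c hc ht
    simpa only [neg_mul] using this
  have hcc : (∑ i, ∑ j, (c i * c j : ℝ)) = 0 := by
    rw [← Finset.sum_mul_sum, hsum, zero_mul]
  have hpt : ∀ t : ℝ,
      (∑ i, ∑ j, (c i * c j) * ((1 - rexp (-(t * ‖P i - P j‖ ^ 2))) * t ^ (-1-H)))
      = -((∑ i, ∑ j, c i * c j * rexp (-(t * ‖P i - P j‖ ^ 2))) * t ^ (-1-H)) := by
    intro t
    have e0 : ∀ i j : Fin n, (c i * c j) * ((1 - rexp (-(t * ‖P i - P j‖ ^ 2))) * t ^ (-1-H))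
        = (c i * c j) * t ^ (-1-H)
          - (c i * c j * rexp (-(t * ‖P i - P j‖ ^ 2))) * t ^ (-1-H) := by
      intro i j; ring
    calc (∑ i, ∑ j, (c i * c j) * ((1 - rexp (-(t * ‖P i - P j‖ ^ 2))) * t ^ (-1-H)))
        = ∑ i, ∑ j, ((c i * c j) * t ^ (-1-H)
            - (c i * c j * rexp (-(t * ‖P i - P j‖ ^ 2))) * t ^ (-1-H)) :=
          Finset.sum_congr rfl fun i _ => Finset.sum_congr rfl fun j _ => e0 i j
      _ = (∑ i, ∑ j, (c i * c j : ℝ)) * t ^ (-1-H)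
            - (∑ i, ∑ j, c i * c j * rexp (-(t * ‖P i - P j‖ ^ 2))) * t ^ (-1-H) := by
          simp only [Finset.sum_sub_distrib, ← Finset.sum_mul]
      _ = _ := by rw [hcc, zero_mul]; ring
  have hsum_int : IntegrableOn (fun t : ℝ =>
      ∑ i, ∑ j, (c i * c j) * ((1 - rexp (-(t * ‖P i - P j‖ ^ 2))) * t ^ (-1-H)))
      (Set.Ioi 0) :=
    integrable_finset_sum _ fun i _ => integrable_finset_sum _ fun j _ =>
      ((hg i j).const_mul _)
  have hFint : IntegrableOn (fun t : ℝ =>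
      (∑ i, ∑ j, c i * c j * rexp (-(t * ‖P i - P j‖ ^ 2))) * t ^ (-1-H)) (Set.Ioi 0) := by
    refine hsum_int.neg.congr (Eventually.of_forall fun t => ?_)
    show -(∑ i, ∑ j, (c i * c j) * ((1 - rexp (-(t * ‖P i - P j‖ ^ 2))) * t ^ (-1-H))) = _
    rw [hpt t, neg_neg]
  have hS : (∑ i, ∑ j, c i * c j * ‖P i - P j‖ ^ (2 * H)) * kappa H
      = ∫ t in Set.Ioi (0:ℝ),
          (∑ i, ∑ j, (c i * c j) * ((1 - rexp (-(t * ‖P i - P j‖ ^ 2))) * t ^ (-1-H))) := by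
    rw [integral_finset_sum _ fun i _ => integrable_finset_sum _ fun j _ =>
      ((hg i j).const_mul _)]
    rw [Finset.sum_mul]
    refine Finset.sum_congr rfl fun i _ => ?_
    rw [integral_finset_sum _ fun j _ => ((hg i j).const_mul _), Finset.sum_mul]
    refine Finset.sum_congr rfl fun j _ => ?_
    rw [MeasureTheory.integral_const_mul, hInt i j, hr i j]
    ring
  have hFpos : 0 < ∫ t in Set.Ioi (0:ℝ),
      (∑ i, ∑ j, c i * c j * rexp (-(t * ‖P i - P j‖ ^ 2))) * t ^ (-1-H) := by
    rw [setIntegral_pos_iff_support_of_nonneg_ae]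
    · have hsub : Set.Ioi (0:ℝ) ⊆ Function.support (fun t : ℝ =>
          (∑ i, ∑ j, c i * c j * rexp (-(t * ‖P i - P j‖ ^ 2))) * t ^ (-1-H)) := by
        intro t ht
        exact ne_of_gt (mul_pos (hQpos t ht) (Real.rpow_pos_of_pos ht _))
      rw [Set.inter_eq_right.mpr hsub, Real.volume_Ioi]
      exact ENNReal.zero_lt_top
    · filter_upwards [ae_restrict_mem measurableSet_Ioi] with t ht
      exact (mul_pos (hQpos t ht) (Real.rpow_pos_of_pos ht _)).le
    · exact hFint
  have hfinal : (∑ i, ∑ j, c i * c j * ‖P i - P j‖ ^ (2 * H)) * kappa H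
      = -∫ t in Set.Ioi (0:ℝ),
          (∑ i, ∑ j, c i * c j * rexp (-(t * ‖P i - P j‖ ^ 2))) * t ^ (-1-H) := by
    rw [hS, setIntegral_congr_fun measurableSet_Ioi (fun t _ => hpt t), integral_neg]
  nlinarith [hκ, hFpos, hfinal]
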